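/- The piecewise-linear interpolant does not increase the L_p norm of the derivative: ‖S′‖_{L_p[0,1]} ≤ ‖f′‖_{L_p[0,1]}, where S′ is the a.e. derivative of S (the step function equal on (ξ_j, ξ_{j+1}) to the slope (f(ξ_{j+1}) − f(ξ_j))/(ξ_{j+1} − ξ_j)). -/

import Mathlib

open MeasureTheory Set ENNReal

lemma aux_ofReal_int {a b : ℝ} {f' : ℝ → ℝ} (hint : IntegrableOn f' (Ioc a b)) :
    ENNReal.ofReal (∫ x in Ioc a b, |f' x|) = ∫⁻ x in Ioc a b, (‖f' x‖₊ : ℝ≥0∞) := by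
  simp only [← enorm_eq_nnnorm]
  rw [← ofReal_integral_norm_eq_lintegral_enorm hint]
  simp [Real.norm_eq_abs]

lemma interval_step_top {a b : ℝ} (hab : a < b) {f' : ℝ → ℝ} {M : ℝ≥0∞}
    (hM : ∀ᵐ x ∂(volume.restrict (Ioc a b)), (‖f' x‖₊ : ℝ≥0∞) ≤ M)
    {c : ℝ} (hcb : |c| * (b - a) ≤ ∫ x in Ioc a b, |f' x|)
    (hint : IntegrableOn f' (Ioc a b)) :
    (‖c‖₊ : ℝ≥0∞) ≤ M := by
  have h0 : ENNReal.ofReal (b - a) ≠ 0 := by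
    exact (ENNReal.ofReal_pos.2 (sub_pos.2 hab)).ne'
  rw [← ENNReal.mul_le_mul_iff_left h0 ofReal_ne_top]
  calc (‖c‖₊ : ℝ≥0∞) * ENNReal.ofReal (b - a)
      = ENNReal.ofReal (|c| * (b - a)) := by
        rw [← enorm_eq_nnnorm, Real.enorm_eq_ofReal_abs, ← ENNReal.ofReal_mul (abs_nonneg _)]
    _ ≤ ∫⁻ x in Ioc a b, (‖f' x‖₊ : ℝ≥0∞) := by
        rw [← aux_ofReal_int hint]; exact ENNReal.ofReal_le_ofReal hcb
    _ ≤ ∫⁻ _ in Ioc a b, M := lintegral_mono_ae hM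
    _ = M * ENNReal.ofReal (b - a) := by rw [setLIntegral_const, Real.volume_Ioc]

lemma aux_holder (c h A P : ℝ≥0∞) (r : ℝ) (hr : 1 ≤ r) (h0 : h ≠ 0) (ht : h ≠ ⊤)
    (h1 : c * h ≤ A) (h2 : A ≤ P ^ (1/r) * h ^ (1 - 1/r)) : c ^ r * h ≤ P := by
  have hr0 : r ≠ 0 := by linarith
  have hc : c ≤ P ^ (1/r) * h ^ (-(1/r)) := by
    calc c ≤ A / h := (ENNReal.le_div_iff_mul_le (Or.inl h0) (Or.inl ht)).2 h1
      _ ≤ (P ^ (1/r) * h ^ (1 - 1/r)) / h := ENNReal.div_le_div_right h2 _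
      _ = P ^ (1/r) * h ^ (-(1/r)) := by
          rw [div_eq_mul_inv, mul_assoc, ← ENNReal.rpow_neg_one h,
            ← ENNReal.rpow_add _ _ h0 ht]
          congr 1
          ring
  have hcr : c ^ r ≤ P * h ^ (-1 : ℝ) := by
    calc c ^ r ≤ (P ^ (1/r) * h ^ (-(1/r))) ^ r :=
          ENNReal.rpow_le_rpow hc (by linarith)
      _ = P * h ^ (-1 : ℝ) := by
          rw [ENNReal.mul_rpow_of_nonneg _ _ (by linarith : (0:ℝ) ≤ r),
            ← ENNReal.rpow_mul, ← ENNReal.rpow_mul, one_div, inv_mul_cancel₀ hr0,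
            ENNReal.rpow_one]
          congr 1
          field_simp
  calc c ^ r * h ≤ P * h ^ (-1 : ℝ) * h := mul_le_mul_left hcr h
    _ = P := by rw [ENNReal.rpow_neg_one, mul_assoc, ENNReal.inv_mul_cancel h0 ht, mul_one]

lemma interval_step (p : ℝ≥0∞) (hp : 1 ≤ p) (hptop : p ≠ ⊤) {a b : ℝ} (hab : a < b)
    {f' : ℝ → ℝ} (hmes : AEStronglyMeasurable f' (volume.restrict (Ioc a b)))
    {c : ℝ} (hcb : |c| * (b - a) ≤ ∫ x in Ioc a b, |f' x|)
    (hint : IntegrableOn f' (Ioc a b)) :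
    (‖c‖₊ : ℝ≥0∞) ^ p.toReal * ENNReal.ofReal (b - a) ≤
      ∫⁻ x in Ioc a b, (‖f' x‖₊ : ℝ≥0∞) ^ p.toReal := by
  have hp0 : p ≠ 0 := fun h => by simp [h] at hp
  have hr1 : 1 ≤ p.toReal := by
    rw [← ENNReal.toReal_one]
    exact ENNReal.toReal_mono hptop hp
  have h0 : ENNReal.ofReal (b - a) ≠ 0 := by
    exact (ENNReal.ofReal_pos.2 (sub_pos.2 hab)).ne'
  have hh := eLpNorm_le_eLpNorm_mul_rpow_measure_univ (μ := volume.restrict (Ioc a b))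
    (p := 1) (q := p) hp hmes
  rw [eLpNorm_one_eq_lintegral_enorm, eLpNorm_eq_lintegral_rpow_enorm_toReal hp0 hptop,
    Measure.restrict_apply_univ, Real.volume_Ioc, ENNReal.toReal_one, div_one] at hh
  refine aux_holder _ _ (∫⁻ x in Ioc a b, (‖f' x‖₊ : ℝ≥0∞)) _ p.toReal hr1 h0 ofReal_ne_top ?_ hh
  calc (‖c‖₊ : ℝ≥0∞) * ENNReal.ofReal (b - a)
      = ENNReal.ofReal (|c| * (b - a)) := by
        rw [← enorm_eq_nnnorm, Real.enorm_eq_ofReal_abs, ← ENNReal.ofReal_mul (abs_nonneg _)]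
    _ ≤ ∫⁻ x in Ioc a b, (‖f' x‖₊ : ℝ≥0∞) := by
        rw [← aux_ofReal_int hint]; exact ENNReal.ofReal_le_ofReal hcb

lemma aux_cover {n : ℕ} (ξ : Fin (n+1) → ℝ) (hξ1 : ξ (Fin.last n) = 1)
    {x : ℝ} (hx0 : ξ 0 < x) (hx1 : x ≤ 1) :
    ∃ j : Fin n, x ∈ Ioc (ξ j.castSucc) (ξ j.succ) := by
  classical
  set T : Finset (Fin (n+1)) := Finset.univ.filter (fun i => ξ i < x) with hT
  have h0T : (0 : Fin (n+1)) ∈ T := by simp [hT, hx0]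
  have hTne : T.Nonempty := ⟨0, h0T⟩
  set j := T.max' hTne with hj
  have hjx : ξ j < x := (Finset.mem_filter.mp (T.max'_mem hTne)).2
  have hjlast : j ≠ Fin.last n := by
    intro h
    rw [h, hξ1] at hjx
    exact absurd hx1 (not_le.2 hjx)
  refine ⟨j.castPred hjlast, ?_, ?_⟩
  · rw [Fin.castSucc_castPred]; exact hjx
  · by_contra hlt
    push_neg at hlt
    have hmem : (j.castPred hjlast).succ ∈ T := by simp [hT, hlt]
    have := T.le_max' _ hmem
    rw [← hj] at this
    have h2 : (j.castPred hjlast).succ ≤ (j.castPred hjlast).castSucc := by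
      rwa [Fin.castSucc_castPred]
    exact absurd h2 (not_le.2 Fin.castSucc_lt_succ)

theorem stmt_13
    (p : ℝ≥0∞) (hp : 1 ≤ p)
    {n : ℕ} (hn : 0 < n) (ξ : Fin (n + 1) → ℝ)
    (hmono : StrictMono ξ) (hξ0 : ξ 0 = 0) (hξ1 : ξ (Fin.last n) = 1)
    (f f' : ℝ → ℝ)
    (hf'int : IntegrableOn f' (Icc 0 1))
    (hAC : ∀ x ∈ Icc (0 : ℝ) 1, f x = f 0 + ∫ t in (0 : ℝ)..x, f' t)
    (hf'Lp : MemLp f' p (volume.restrict (Icc 0 1)))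
    (S S' : ℝ → ℝ)
    (hSaff : ∀ j : Fin n, ∀ x ∈ Icc (ξ j.castSucc) (ξ j.succ),
      S x = f (ξ j.castSucc) +
        (f (ξ j.succ) - f (ξ j.castSucc)) / (ξ j.succ - ξ j.castSucc) *
          (x - ξ j.castSucc))
    (hS' : ∀ j : Fin n, ∀ x ∈ Ioo (ξ j.castSucc) (ξ j.succ),
      S' x = (f (ξ j.succ) - f (ξ j.castSucc)) / (ξ j.succ - ξ j.castSucc)) :
    eLpNorm S' p (volume.restrict (Icc 0 1)) ≤
      eLpNorm f' p (volume.restrict (Icc 0 1)) := by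
  classical
  have hp0 : p ≠ 0 := fun h => by simp [h] at hp
  have hab : ∀ j : Fin n, ξ j.castSucc < ξ j.succ := fun j => hmono (Fin.castSucc_lt_succ (i := j))
  have ha0 : ∀ j : Fin n, (0:ℝ) ≤ ξ j.castSucc := fun j => by
    rw [← hξ0]; exact hmono.monotone (Fin.zero_le _)
  have hb1 : ∀ j : Fin n, ξ j.succ ≤ 1 := fun j => by
    rw [← hξ1]; exact hmono.monotone (Fin.le_last _)
  have hsub : ∀ j : Fin n, Ioc (ξ j.castSucc) (ξ j.succ) ⊆ Icc 0 1 := fun j x hx =>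
    ⟨le_trans (ha0 j) hx.1.le, le_trans hx.2 (hb1 j)⟩
  have hintj : ∀ j : Fin n, IntegrableOn f' (Ioc (ξ j.castSucc) (ξ j.succ)) :=
    fun j => hf'int.mono_set (hsub j)
  -- key slope bound
  have hint01 : ∀ t ∈ Icc (0:ℝ) 1, IntervalIntegrable f' volume 0 t := fun t ht =>
    (hf'int.mono_set (by rw [uIcc_of_le ht.1]; exact Icc_subset_Icc le_rfl ht.2)).intervalIntegrable
  have hcb : ∀ j : Fin n,
      |(f (ξ j.succ) - f (ξ j.castSucc)) / (ξ j.succ - ξ j.castSucc)|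
        * (ξ j.succ - ξ j.castSucc) ≤ ∫ x in Ioc (ξ j.castSucc) (ξ j.succ), |f' x| := by
    intro j
    have hba : (0:ℝ) < ξ j.succ - ξ j.castSucc := sub_pos.2 (hab j)
    have hfb : f (ξ j.succ) - f (ξ j.castSucc) = ∫ t in (ξ j.castSucc)..(ξ j.succ), f' t := by
      have h1 := hAC (ξ j.succ) ⟨le_trans (ha0 j) (hab j).le, hb1 j⟩
      have h2 := hAC (ξ j.castSucc) ⟨ha0 j, le_trans (hab j).le (hb1 j)⟩
      have h3 := intervalIntegral.integral_interval_sub_left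
        (hint01 (ξ j.succ) ⟨le_trans (ha0 j) (hab j).le, hb1 j⟩)
        (hint01 (ξ j.castSucc) ⟨ha0 j, le_trans (hab j).le (hb1 j)⟩)
      rw [h1, h2]
      rw [← h3]; ring
    have : |(f (ξ j.succ) - f (ξ j.castSucc)) / (ξ j.succ - ξ j.castSucc)|
        * (ξ j.succ - ξ j.castSucc) = |f (ξ j.succ) - f (ξ j.castSucc)| := by
      rw [abs_div, abs_of_pos hba, div_mul_cancel₀ _ (ne_of_gt hba)]
    rw [this, hfb, ← intervalIntegral.integral_of_le (hab j).le]
    exact intervalIntegral.abs_integral_le_integral_abs (hab j).le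
  by_cases hptop : p = ⊤
  · -- case p = ∞
    subst hptop
    rw [eLpNorm_exponent_top, eLpNorm_exponent_top]
    set M := eLpNormEssSup f' (volume.restrict (Icc 0 1)) with hM
    have hbound : ∀ j : Fin n,
        (‖(f (ξ j.succ) - f (ξ j.castSucc)) / (ξ j.succ - ξ j.castSucc)‖₊ : ℝ≥0∞) ≤ M := by
      intro j
      refine interval_step_top (hab j) ?_ (hcb j) (hintj j)
      have h1 : ∀ᵐ x ∂(volume.restrict (Icc 0 1)), (‖f' x‖₊ : ℝ≥0∞) ≤ M := ae_le_eLpNormEssSup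
      have h2 : volume.restrict (Ioc (ξ j.castSucc) (ξ j.succ)) =
          (volume.restrict (Icc 0 1)).restrict (Ioc (ξ j.castSucc) (ξ j.succ)) := by
        rw [Measure.restrict_restrict measurableSet_Ioc, inter_eq_self_of_subset_left (hsub j)]
      rw [h2]
      exact ae_restrict_of_ae h1
    have haecov : ∀ᵐ x ∂(volume.restrict (Icc 0 1)),
        x ∈ ⋃ j : Fin n, Ioo (ξ j.castSucc) (ξ j.succ) := by
      rw [ae_iff, Measure.restrict_apply]
      · refine measure_mono_null (fun x hx => ?_) ((finite_range ξ).measure_zero volume)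
        obtain ⟨hx1, hx2⟩ := hx
        simp only [mem_setOf_eq, mem_iUnion] at hx1
        rcases eq_or_lt_of_le hx2.1 with h0 | h0
        · exact ⟨0, by rw [hξ0, h0]⟩
        · obtain ⟨j, hj⟩ := aux_cover ξ hξ1 (by rwa [hξ0]) hx2.2
          rcases eq_or_lt_of_le hj.2 with hb | hb
          · exact ⟨j.succ, hb.symm⟩
          · exact absurd ⟨j, hj.1, hb⟩ hx1
      · exact (MeasurableSet.iUnion (fun j => measurableSet_Ioo)).compl
    refine essSup_le_of_ae_le M ?_
    filter_upwards [haecov] with x hx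
    obtain ⟨j, hj⟩ := mem_iUnion.mp hx
    rw [hS' j x hj]
    exact hbound j
  · -- case p finite
    have hr1 : 1 ≤ p.toReal := by
      rw [← ENNReal.toReal_one]; exact ENNReal.toReal_mono hptop hp
    rw [eLpNorm_eq_lintegral_rpow_enorm_toReal hp0 hptop, eLpNorm_eq_lintegral_rpow_enorm_toReal hp0 hptop]
    refine ENNReal.rpow_le_rpow ?_ (by positivity)
    -- per-interval constancy of S'
    have hSconst : ∀ j : Fin n,
        ∫⁻ x in Ioc (ξ j.castSucc) (ξ j.succ), (‖S' x‖₊ : ℝ≥0∞) ^ p.toReal =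
          (‖(f (ξ j.succ) - f (ξ j.castSucc)) / (ξ j.succ - ξ j.castSucc)‖₊ : ℝ≥0∞) ^ p.toReal
            * ENNReal.ofReal (ξ j.succ - ξ j.castSucc) := by
      intro j
      have h1 : ∀ᵐ x ∂(volume.restrict (Ioc (ξ j.castSucc) (ξ j.succ))),
          x ∈ Ioo (ξ j.castSucc) (ξ j.succ) := by
        rw [ae_iff, Measure.restrict_apply]
        · refine measure_mono_null (fun x hx => ?_) (measure_singleton (ξ j.succ))
          obtain ⟨hx1, hx2⟩ := hx
          simp only [mem_setOf_eq, mem_Ioo, not_and, not_lt] at hx1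
          exact le_antisymm hx2.2 (hx1 hx2.1)
        · exact measurableSet_Ioo.compl
      have h2 : ∀ᵐ x ∂(volume.restrict (Ioc (ξ j.castSucc) (ξ j.succ))),
          (‖S' x‖₊ : ℝ≥0∞) ^ p.toReal =
          (‖(f (ξ j.succ) - f (ξ j.castSucc)) / (ξ j.succ - ξ j.castSucc)‖₊ : ℝ≥0∞) ^ p.toReal := by
        filter_upwards [h1] with x hx
        rw [hS' j x hx]
      rw [lintegral_congr_ae h2, setLIntegral_const, Real.volume_Ioc]
    have hHold : ∀ j : Fin n,
        ∫⁻ x in Ioc (ξ j.castSucc) (ξ j.succ), (‖S' x‖₊ : ℝ≥0∞) ^ p.toReal ≤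
          ∫⁻ x in Ioc (ξ j.castSucc) (ξ j.succ), (‖f' x‖₊ : ℝ≥0∞) ^ p.toReal := by
      intro j
      rw [hSconst j]
      exact interval_step p hp hptop (hab j)
        (hf'Lp.1.mono_measure (Measure.restrict_mono (hsub j) le_rfl)) (hcb j) (hintj j)
    have hdisj : Pairwise (Function.onFun Disjoint
        (fun j : Fin n => Ioc (ξ j.castSucc) (ξ j.succ))) := by
      intro i j hij
      rcases hij.lt_or_gt with h | h
      · exact ((Iic_disjoint_Ioi (hmono.monotone (Fin.succ_le_castSucc_iff.2 h))).mono
          Ioc_subset_Iic_self Ioc_subset_Ioi_self)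
      · exact ((Iic_disjoint_Ioi (hmono.monotone (Fin.succ_le_castSucc_iff.2 h))).mono
          Ioc_subset_Iic_self Ioc_subset_Ioi_self).symm
    calc ∫⁻ x in Icc (0:ℝ) 1, (‖S' x‖₊ : ℝ≥0∞) ^ p.toReal
        ≤ ∫⁻ x in insert (0:ℝ) (⋃ j : Fin n, Ioc (ξ j.castSucc) (ξ j.succ)),
            (‖S' x‖₊ : ℝ≥0∞) ^ p.toReal := by
          refine lintegral_mono_set (fun x hx => ?_)
          rcases eq_or_lt_of_le hx.1 with h0 | h0
          · exact mem_insert_iff.2 (Or.inl h0.symm)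
          · obtain ⟨j, hj⟩ := aux_cover ξ hξ1 (by rwa [hξ0]) hx.2
            exact mem_insert_iff.2 (Or.inr (mem_iUnion.2 ⟨j, hj⟩))
      _ ≤ (∫⁻ x in ({0} : Set ℝ), (‖S' x‖₊ : ℝ≥0∞) ^ p.toReal) +
            ∫⁻ x in ⋃ j : Fin n, Ioc (ξ j.castSucc) (ξ j.succ),
              (‖S' x‖₊ : ℝ≥0∞) ^ p.toReal := by
          rw [insert_eq]; exact lintegral_union_le _ _ _
      _ = ∫⁻ x in ⋃ j : Fin n, Ioc (ξ j.castSucc) (ξ j.succ),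
            (‖S' x‖₊ : ℝ≥0∞) ^ p.toReal := by
          rw [setLIntegral_measure_zero _ _ (measure_singleton 0), zero_add]
      _ ≤ ∑' j : Fin n, ∫⁻ x in Ioc (ξ j.castSucc) (ξ j.succ),
            (‖S' x‖₊ : ℝ≥0∞) ^ p.toReal := lintegral_iUnion_le _ _
      _ = ∑ j : Fin n, ∫⁻ x in Ioc (ξ j.castSucc) (ξ j.succ),
            (‖S' x‖₊ : ℝ≥0∞) ^ p.toReal := tsum_fintype _
      _ ≤ ∑ j : Fin n, ∫⁻ x in Ioc (ξ j.castSucc) (ξ j.succ),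
            (‖f' x‖₊ : ℝ≥0∞) ^ p.toReal := Finset.sum_le_sum (fun j _ => hHold j)
      _ = ∫⁻ x in ⋃ j ∈ Finset.univ, Ioc (ξ (Fin.castSucc j)) (ξ (Fin.succ j)),
            (‖f' x‖₊ : ℝ≥0∞) ^ p.toReal := by
          rw [lintegral_biUnion_finset (fun i _ j _ hij => hdisj hij)
            (fun j _ => measurableSet_Ioc)]
      _ ≤ ∫⁻ x in Icc (0:ℝ) 1, (‖f' x‖₊ : ℝ≥0∞) ^ p.toReal := by
          refine lintegral_mono_set ?_
          simp only [Finset.mem_univ, iUnion_true, iUnion_subset_iff]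
          exact fun j => hsub j
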